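/- arXiv:2605.06865 — 2 statements merged into one kernel-verified Lean document; each statement's English description precedes it below -/
import Mathlib

section
/- Hoeffding's inequality for sampling without replacement: let X be the number of marked items in a uniform random sample of size d drawn without replacement from a population of N items containing K marked items, and let p = K/N. Then for any ε > 0, P(X ≥ d(p + ε)) ≤ exp(-2 ε² d). -/
open Finset Real

/-- The "marked" set: the first `K` elements of `Fin N`. -/
def marked (N K : ℕ) : Finset (Fin N) :=
  (Finset.univ : Finset (Fin N)).filter (fun i => (i : ℕ) < K)

/-- Probability, under a uniformly random `d`-element subset `sk` of an `N`-element
set with `K` marked elements, that `X = |sk ∩ Marked|` satisfies the event `E`. -/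
noncomputable def hyperProb (N K d : ℕ) (E : ℕ → Prop) : ℝ :=
  letI : DecidablePred (fun s : Finset (Fin N) => E ((s ∩ marked N K).card)) :=
    fun _ => Classical.dec _
  ((((Finset.univ : Finset (Fin N)).powersetCard d).filter
      (fun s => E ((s ∩ marked N K).card))).card : ℝ) /
    ((((Finset.univ : Finset (Fin N)).powersetCard d).card : ℝ))

lemma hoeffding_lemma {p t : ℝ} (hp0 : 0 ≤ p) (hp1 : p ≤ 1) (ht : 0 ≤ t) :
    1 - p + p * Real.exp t ≤ Real.exp (p * t + t ^ 2 / 8) := by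
  set q : ℝ := 1 - p with hq
  have hq0 : 0 ≤ q := by simp [hq]; linarith
  -- D t := q + p * exp t, positive for all t... for t ≥ 0, D ≥ 1
  have hD : ∀ s : ℝ, 0 ≤ s → 1 ≤ q + p * Real.exp s := by
    intro s hs
    nlinarith [Real.one_le_exp hs, Real.exp_pos s]
  set g1 : ℝ → ℝ := fun s => p + s / 4 - p * Real.exp s / (q + p * Real.exp s) with hg1
  set g : ℝ → ℝ := fun s => p * s + s ^ 2 / 8 - Real.log (q + p * Real.exp s) with hg
  have hDpos : ∀ s : ℝ, 0 ≤ s → 0 < q + p * Real.exp s := fun s hs => lt_of_lt_of_le one_pos (hD s hs)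
  have hderiv1 : ∀ s : ℝ, 0 ≤ s → HasDerivAt g (g1 s) s := by
    intro s hs
    have hDs : q + p * Real.exp s ≠ 0 := ne_of_gt (hDpos s hs)
    have h1 : HasDerivAt (fun x : ℝ => q + p * Real.exp x) (p * Real.exp s) s := by
      simpa using ((Real.hasDerivAt_exp s).const_mul p).const_add q
    have h2 : HasDerivAt (fun x : ℝ => Real.log (q + p * Real.exp x))
        (p * Real.exp s / (q + p * Real.exp s)) s := h1.log hDs
    have h3 : HasDerivAt (fun x : ℝ => p * x + x ^ 2 / 8) (p + 2 * s / 8) s := by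
      exact (((hasDerivAt_id' s).const_mul p).add ((hasDerivAt_pow 2 s).div_const 8)).congr_deriv (by norm_num)
    have := h3.sub h2
    exact this.congr_deriv (by simp only [hg1]; ring)
  have hderiv2 : ∀ s : ℝ, 0 ≤ s →
      HasDerivAt g1 (1/4 - q * (p * Real.exp s) / (q + p * Real.exp s) ^ 2) s := by
    intro s hs
    have hDs : q + p * Real.exp s ≠ 0 := ne_of_gt (hDpos s hs)
    have h1 : HasDerivAt (fun x : ℝ => q + p * Real.exp x) (p * Real.exp s) s := by
      simpa using ((Real.hasDerivAt_exp s).const_mul p).const_add q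
    have h2 : HasDerivAt (fun x : ℝ => p * Real.exp x) (p * Real.exp s) s :=
      (Real.hasDerivAt_exp s).const_mul p
    have h3 := (h2.div h1 hDs)
    have h4 : HasDerivAt (fun x : ℝ => p + x / 4) (1/4) s := by
      simpa using ((hasDerivAt_id s).div_const 4).const_add p
    have := h4.sub h3
    exact this.congr_deriv (by ring)
  -- g1 is monotone on Ici 0 (derivative nonneg), and g1 0 = 0
  have hg1mono : MonotoneOn g1 (Set.Ici (0:ℝ)) := by
    apply monotoneOn_of_deriv_nonneg (convex_Ici 0)
    · exact fun s hs => ((hderiv2 s hs).continuousAt).continuousWithinAt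
    · intro s hs
      rw [interior_Ici] at hs
      exact ((hderiv2 s (le_of_lt hs)).differentiableAt).differentiableWithinAt
    · intro s hs
      rw [interior_Ici] at hs
      rw [(hderiv2 s (le_of_lt hs)).deriv]
      have h := hDpos s (le_of_lt hs)
      have hsq : 4 * (q * (p * Real.exp s)) ≤ (q + p * Real.exp s) ^ 2 := by
        nlinarith [sq_nonneg (q - p * Real.exp s)]
      rw [sub_nonneg, div_le_iff₀ (by positivity)]
      nlinarith
  have hg1zero : g1 0 = 0 := by simp [hg1, hq]
  have hg1nonneg : ∀ s : ℝ, 0 ≤ s → 0 ≤ g1 s := by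
    intro s hs
    rw [← hg1zero]
    exact hg1mono (Set.mem_Ici.mpr le_rfl) (Set.mem_Ici.mpr hs) hs
  have hgmono : MonotoneOn g (Set.Ici (0:ℝ)) := by
    apply monotoneOn_of_deriv_nonneg (convex_Ici 0)
    · exact fun s hs => ((hderiv1 s hs).continuousAt).continuousWithinAt
    · intro s hs
      rw [interior_Ici] at hs
      exact ((hderiv1 s (le_of_lt hs)).differentiableAt).differentiableWithinAt
    · intro s hs
      rw [interior_Ici] at hs
      rw [(hderiv1 s (le_of_lt hs)).deriv]
      exact hg1nonneg s (le_of_lt hs)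
  have hgzero : g 0 = 0 := by simp [hg, hq]
  have hgt : 0 ≤ g t := by
    rw [← hgzero]; exact hgmono (Set.mem_Ici.mpr le_rfl) (Set.mem_Ici.mpr ht) ht
  have hlog : Real.log (q + p * Real.exp t) ≤ p * t + t ^ 2 / 8 := by
    simp only [hg] at hgt; linarith
  calc q + p * Real.exp t = Real.exp (Real.log (q + p * Real.exp t)) :=
        (Real.exp_log (hDpos t ht)).symm
    _ ≤ Real.exp (p * t + t ^ 2 / 8) := Real.exp_le_exp.mpr hlog

lemma reindex_pairs {N m : ℕ} (G : Finset (Fin N) → Fin N → ℝ) :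
    ∑ s ∈ powersetCard (m+1) (univ : Finset (Fin N)), ∑ x ∈ s, G (s.erase x) x
    = ∑ u ∈ powersetCard m (univ : Finset (Fin N)), ∑ x ∈ uᶜ, G u x := by
  rw [Finset.sum_sigma' (powersetCard (m+1) (univ : Finset (Fin N))) (fun s => s)
    (fun s x => G (s.erase x) x),
    Finset.sum_sigma' (powersetCard m (univ : Finset (Fin N))) (fun u => uᶜ)
    (fun u x => G u x)]
  apply Finset.sum_nbij' (fun (p : Σ _ : Finset (Fin N), Fin N) => (⟨p.1.erase p.2, p.2⟩ : Σ _ : Finset (Fin N), Fin N)) (fun (p : Σ _ : Finset (Fin N), Fin N) => (⟨insert p.2 p.1, p.2⟩ : Σ _ : Finset (Fin N), Fin N))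
  · rintro ⟨s, x⟩ hp
    rw [Finset.mem_sigma] at hp ⊢
    obtain ⟨hs, hx⟩ := hp
    rw [Finset.mem_powersetCard_univ] at hs ⊢
    refine ⟨?_, ?_⟩
    · rw [Finset.card_erase_of_mem hx, hs]; omega
    · simp [Finset.mem_compl]
  · rintro ⟨u, x⟩ hp
    rw [Finset.mem_sigma] at hp ⊢
    obtain ⟨hu, hx⟩ := hp
    rw [Finset.mem_powersetCard_univ] at hu ⊢
    rw [Finset.mem_compl] at hx
    refine ⟨?_, Finset.mem_insert_self _ _⟩
    rw [Finset.card_insert_of_notMem hx, hu]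
  · rintro ⟨s, x⟩ hp
    rw [Finset.mem_sigma] at hp
    simp [Finset.insert_erase hp.2]
  · rintro ⟨u, x⟩ hp
    rw [Finset.mem_sigma] at hp
    rw [Finset.mem_compl] at hp
    simp [Finset.erase_insert hp.2]
  · rintro ⟨s, x⟩ hp
    rfl


lemma card_marked {N K : ℕ} (hK : K ≤ N) : (marked N K).card = K := by
  classical
  have : (marked N K).image (Fin.val) = Finset.range K := by
    ext n
    simp only [marked, Finset.mem_image, Finset.mem_filter, Finset.mem_univ, true_and,
      Finset.mem_range]
    constructor
    · rintro ⟨i, hi, rfl⟩; exact hi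
    · intro hn; exact ⟨⟨n, lt_of_lt_of_le hn hK⟩, hn, rfl⟩
  rw [← Finset.card_image_of_injective (marked N K) Fin.val_injective, this,
    Finset.card_range]

lemma card_inter_compl {N K : ℕ} (hK : K ≤ N) (u : Finset (Fin N)) :
    (u ∩ marked N K).card + (uᶜ ∩ marked N K).card = K := by
  classical
  have hdisj : Disjoint (u ∩ marked N K) (uᶜ ∩ marked N K) := by
    rw [Finset.disjoint_left]
    intro a ha hb
    exact (Finset.mem_compl.mp (Finset.mem_inter.mp hb).1) (Finset.mem_inter.mp ha).1
  have hunion : (u ∩ marked N K) ∪ (uᶜ ∩ marked N K) = marked N K := by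
    ext x
    by_cases hx : x ∈ u <;> simp [Finset.mem_compl, hx]
  rw [← Finset.card_union_of_disjoint hdisj, hunion, card_marked hK]

lemma card_inter_erase {N K : ℕ} {s : Finset (Fin N)} {x : Fin N} (hx : x ∈ s) :
    ((s ∩ marked N K).card : ℝ)
      = ((s.erase x ∩ marked N K).card : ℝ) + (if x ∈ marked N K then (1:ℝ) else 0) := by
  classical
  rw [Finset.erase_inter]
  by_cases hm : x ∈ marked N K
  · have hxm : x ∈ s ∩ marked N K := Finset.mem_inter.mpr ⟨hx, hm⟩
    rw [if_pos hm, Finset.card_erase_of_mem hxm]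
    have : 1 ≤ (s ∩ marked N K).card := Finset.card_pos.mpr ⟨x, hxm⟩
    push_cast [Nat.cast_sub this]
    ring
  · rw [if_neg hm, Finset.erase_eq_of_notMem (fun h => hm (Finset.mem_inter.mp h).2)]
    ring

/-- mean: N * ∑ card(u ∩ marked) = K * m * choose N m -/
lemma sum_card_inter (N K : ℕ) (hK : K ≤ N) :
    ∀ m, m ≤ N →
      (N : ℝ) * ∑ u ∈ powersetCard m (univ : Finset (Fin N)), ((u ∩ marked N K).card : ℝ)
        = K * m * (N.choose m) := by
  intro m
  induction m with
  | zero => intro _; simp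
  | succ m ih =>
    intro hm
    have hmN : m ≤ N := le_of_lt (Nat.lt_of_lt_of_le (Nat.lt_succ_self m) hm)
    have step : ∑ s ∈ powersetCard (m+1) (univ : Finset (Fin N)), ((s ∩ marked N K).card : ℝ)
        = ∑ u ∈ powersetCard m (univ : Finset (Fin N)), ((K : ℝ) - (u ∩ marked N K).card) := by
      have h1 : ∀ s ∈ powersetCard (m+1) (univ : Finset (Fin N)),
          ((s ∩ marked N K).card : ℝ)
            = ∑ x ∈ s, (if x ∈ marked N K then (1:ℝ) else 0) := by
        intro s _
        rw [Finset.sum_ite_mem]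
        simp
      rw [Finset.sum_congr rfl h1, reindex_pairs (fun _ x => (if x ∈ marked N K then (1:ℝ) else 0))]
      apply Finset.sum_congr rfl
      intro u _
      rw [Finset.sum_ite_mem]
      have h := card_inter_compl (N := N) hK u
      have h2 : ((u ∩ marked N K).card : ℝ) + ((uᶜ ∩ marked N K).card : ℝ) = K := by
        exact_mod_cast congrArg (Nat.cast : ℕ → ℝ) h
      have : ((uᶜ ∩ marked N K).card : ℝ) = (K : ℝ) - ((u ∩ marked N K).card : ℝ) := by
        linarith
      simp [this]
    rw [step, Finset.sum_sub_distrib, Finset.sum_const, Finset.card_powersetCard,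
      Finset.card_univ, Fintype.card_fin, nsmul_eq_mul, mul_sub, ih hmN]
    have h0 := Nat.choose_succ_right_eq N m
    have hcast : ((N.choose (m+1) * (m+1) : ℕ) : ℝ) = ((N.choose m * (N - m) : ℕ) : ℝ) := by
      exact_mod_cast congrArg (Nat.cast : ℕ → ℝ) h0
    push_cast [Nat.cast_sub hmN] at hcast
    push_cast
    nlinarith [hcast]

lemma mgf_bound (N K : ℕ) (hK : K ≤ N) (t : ℝ) (ht : 0 ≤ t) :
    ∀ d, d ≤ N →
      ∑ s ∈ powersetCard d (univ : Finset (Fin N)), Real.exp (t * ((s ∩ marked N K).card : ℝ))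
        ≤ (N.choose d : ℝ) * ((1 - (K:ℝ)/N) + (K:ℝ)/N * Real.exp t) ^ d := by
  set B : ℝ := (1 - (K:ℝ)/N) + (K:ℝ)/N * Real.exp t with hB
  have hpq : (0:ℝ) ≤ (K:ℝ)/N ∧ (K:ℝ)/N ≤ 1 := by
    constructor
    · positivity
    · rcases Nat.eq_zero_or_pos N with h | h
      · subst h
        interval_cases K
        simp
      · rw [div_le_one (by exact_mod_cast h)]
        exact_mod_cast hK
  have hB1 : (1:ℝ) ≤ B := by
    have h1 : (1:ℝ) ≤ Real.exp t := Real.one_le_exp ht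
    rw [hB]
    nlinarith [mul_nonneg hpq.1 (sub_nonneg.mpr h1)]
  have hB0 : (0:ℝ) ≤ B := le_trans zero_le_one hB1
  intro d
  induction d with
  | zero => intro _; simp
  | succ m ih =>
    intro hm
    have hmN : m ≤ N := le_of_lt (Nat.lt_of_lt_of_le (Nat.lt_succ_self m) hm)
    have hN : 0 < N := lt_of_lt_of_le (Nat.succ_pos m) hm
    have hNR : (0:ℝ) < N := by exact_mod_cast hN
    have hSm0 : (0:ℝ) ≤ ∑ u ∈ powersetCard m (univ : Finset (Fin N)),
        Real.exp (t * ((u ∩ marked N K).card : ℝ)) :=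
      Finset.sum_nonneg fun u _ => (Real.exp_pos _).le
    have hCm : (0:ℝ) < (N.choose m : ℝ) := by exact_mod_cast Nat.choose_pos hmN
    have hcompl : ∀ u ∈ powersetCard m (univ : Finset (Fin N)),
        ((uᶜ ∩ marked N K).card : ℝ) = (K : ℝ) - ((u ∩ marked N K).card : ℝ) := by
      intro u _
      have h := card_inter_compl (N := N) hK u
      have h2 : ((u ∩ marked N K).card : ℝ) + ((uᶜ ∩ marked N K).card : ℝ) = K := by
        exact_mod_cast congrArg (Nat.cast : ℕ → ℝ) h
      linarith
    -- key identity
    have key : ((m:ℝ)+1) * ∑ s ∈ powersetCard (m+1) (univ : Finset (Fin N)),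
          Real.exp (t * ((s ∩ marked N K).card : ℝ))
        = ∑ u ∈ powersetCard m (univ : Finset (Fin N)),
            Real.exp (t * ((u ∩ marked N K).card : ℝ)) *
              (((N:ℝ) - m) + (Real.exp t - 1) * ((K:ℝ) - ((u ∩ marked N K).card : ℝ))) := by
      rw [Finset.mul_sum]
      have h1 : ∀ s ∈ powersetCard (m+1) (univ : Finset (Fin N)),
          ((m:ℝ)+1) * Real.exp (t * ((s ∩ marked N K).card : ℝ))
            = ∑ x ∈ s, Real.exp (t * (((s.erase x ∩ marked N K).card : ℝ)
                + (if x ∈ marked N K then (1:ℝ) else 0))) := by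
        intro s hs
        rw [Finset.mem_powersetCard_univ] at hs
        have h2 : ∀ x ∈ s, Real.exp (t * (((s.erase x ∩ marked N K).card : ℝ)
            + (if x ∈ marked N K then (1:ℝ) else 0)))
            = Real.exp (t * ((s ∩ marked N K).card : ℝ)) := by
          intro x hx
          rw [← card_inter_erase (K := K) hx]
        rw [Finset.sum_congr rfl h2, Finset.sum_const, hs, nsmul_eq_mul]
        push_cast
        ring
      rw [Finset.sum_congr rfl h1,
        reindex_pairs (fun u x => Real.exp (t * (((u ∩ marked N K).card : ℝ)
          + (if x ∈ marked N K then (1:ℝ) else 0))))]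
      apply Finset.sum_congr rfl
      intro u hu
      have hucard : u.card = m := (Finset.mem_powersetCard_univ).mp hu
      have h3 : ∀ x ∈ uᶜ, Real.exp (t * (((u ∩ marked N K).card : ℝ)
          + (if x ∈ marked N K then (1:ℝ) else 0)))
          = Real.exp (t * ((u ∩ marked N K).card : ℝ)) *
              ((1:ℝ) + (if x ∈ marked N K then Real.exp t - 1 else 0)) := by
        intro x _
        by_cases hxm : x ∈ marked N K
        · rw [if_pos hxm, if_pos hxm, mul_add, Real.exp_add]
          ring
        · rw [if_neg hxm, if_neg hxm]
          simp
      rw [Finset.sum_congr rfl h3, ← Finset.mul_sum]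
      congr 1
      rw [Finset.sum_add_distrib, Finset.sum_const, Finset.sum_ite_mem, Finset.sum_const,
        Finset.card_compl, Fintype.card_fin, hucard]
      rw [nsmul_eq_mul, nsmul_eq_mul, mul_one, hcompl u hu, Nat.cast_sub hmN]
      push_cast
      ring
    -- Chebyshev bound on the correlation term
    have cheb : (N.choose m : ℝ) * ∑ u ∈ powersetCard m (univ : Finset (Fin N)),
          Real.exp (t * ((u ∩ marked N K).card : ℝ)) * ((K:ℝ) - ((u ∩ marked N K).card : ℝ))
        ≤ (∑ u ∈ powersetCard m (univ : Finset (Fin N)),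
            Real.exp (t * ((u ∩ marked N K).card : ℝ))) *
          (∑ u ∈ powersetCard m (univ : Finset (Fin N)),
            ((K:ℝ) - ((u ∩ marked N K).card : ℝ))) := by
      have hanti : AntivaryOn (fun u : Finset (Fin N) => Real.exp (t * ((u ∩ marked N K).card : ℝ)))
          (fun u : Finset (Fin N) => (K:ℝ) - ((u ∩ marked N K).card : ℝ))
          (powersetCard m (univ : Finset (Fin N))) := by
        intro i _ j _ hij
        dsimp only at hij ⊢
        have hcc : ((j ∩ marked N K).card : ℝ) ≤ ((i ∩ marked N K).card : ℝ) := by linarith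
        exact Real.exp_le_exp.mpr (mul_le_mul_of_nonneg_left hcc ht)
      have := hanti.card_mul_sum_le_sum_mul_sum
      rwa [Finset.card_powersetCard, Finset.card_univ, Fintype.card_fin] at this
    -- the mean of K - c u
    have hmean : ∑ u ∈ powersetCard m (univ : Finset (Fin N)),
        ((K:ℝ) - ((u ∩ marked N K).card : ℝ))
        = (K:ℝ) * ((N:ℝ) - m) / N * (N.choose m : ℝ) := by
      have h := sum_card_inter N K hK m hmN
      rw [Finset.sum_sub_distrib, Finset.sum_const, Finset.card_powersetCard,
        Finset.card_univ, Fintype.card_fin, nsmul_eq_mul]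
      field_simp
      nlinarith [h]
    -- combine
    have hg0 : (0:ℝ) ≤ (K:ℝ) * ((N:ℝ) - m) / N := by
      have : (m:ℝ) ≤ N := by exact_mod_cast hmN
      have h1 : (0:ℝ) ≤ (N:ℝ) - m := by linarith
      positivity
    have hfg : ∑ u ∈ powersetCard m (univ : Finset (Fin N)),
          Real.exp (t * ((u ∩ marked N K).card : ℝ)) * ((K:ℝ) - ((u ∩ marked N K).card : ℝ))
        ≤ (∑ u ∈ powersetCard m (univ : Finset (Fin N)),
            Real.exp (t * ((u ∩ marked N K).card : ℝ))) * ((K:ℝ) * ((N:ℝ) - m) / N) := by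
      rw [hmean] at cheb
      rw [← mul_le_mul_iff_right₀ hCm]
      calc (N.choose m : ℝ) * (∑ u ∈ powersetCard m (univ : Finset (Fin N)),
            Real.exp (t * ((u ∩ marked N K).card : ℝ)) * ((K:ℝ) - ((u ∩ marked N K).card : ℝ)))
          ≤ (∑ u ∈ powersetCard m (univ : Finset (Fin N)),
              Real.exp (t * ((u ∩ marked N K).card : ℝ))) *
            ((K:ℝ) * ((N:ℝ) - m) / N * (N.choose m : ℝ)) := cheb
        _ = (N.choose m : ℝ) * ((∑ u ∈ powersetCard m (univ : Finset (Fin N)),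
              Real.exp (t * ((u ∩ marked N K).card : ℝ))) * ((K:ℝ) * ((N:ℝ) - m) / N)) := by ring
    have ht1 : (0:ℝ) ≤ Real.exp t - 1 := sub_nonneg.mpr (Real.one_le_exp ht)
    -- final chain
    have hchain : ((m:ℝ)+1) * ∑ s ∈ powersetCard (m+1) (univ : Finset (Fin N)),
          Real.exp (t * ((s ∩ marked N K).card : ℝ))
        ≤ ((N:ℝ) - m) * B * ((N.choose m : ℝ) * B ^ m) := by
      rw [key]
      have e1 : ∑ u ∈ powersetCard m (univ : Finset (Fin N)),
            Real.exp (t * ((u ∩ marked N K).card : ℝ)) *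
              (((N:ℝ) - m) + (Real.exp t - 1) * ((K:ℝ) - ((u ∩ marked N K).card : ℝ)))
          = ((N:ℝ) - m) * (∑ u ∈ powersetCard m (univ : Finset (Fin N)),
              Real.exp (t * ((u ∩ marked N K).card : ℝ)))
            + (Real.exp t - 1) * ∑ u ∈ powersetCard m (univ : Finset (Fin N)),
              Real.exp (t * ((u ∩ marked N K).card : ℝ)) *
                ((K:ℝ) - ((u ∩ marked N K).card : ℝ)) := by
        rw [Finset.mul_sum, Finset.mul_sum, ← Finset.sum_add_distrib]
        apply Finset.sum_congr rfl
        intro u _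
        ring
      rw [e1]
      have hNm0 : (0:ℝ) ≤ (N:ℝ) - m := by
        have : (m:ℝ) ≤ N := by exact_mod_cast hmN
        linarith
      have step1 : ((N:ℝ) - m) * (∑ u ∈ powersetCard m (univ : Finset (Fin N)),
            Real.exp (t * ((u ∩ marked N K).card : ℝ)))
          + (Real.exp t - 1) * ∑ u ∈ powersetCard m (univ : Finset (Fin N)),
              Real.exp (t * ((u ∩ marked N K).card : ℝ)) *
                ((K:ℝ) - ((u ∩ marked N K).card : ℝ))
          ≤ ((N:ℝ) - m) * B * (∑ u ∈ powersetCard m (univ : Finset (Fin N)),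
              Real.exp (t * ((u ∩ marked N K).card : ℝ))) := by
        have h2 := mul_le_mul_of_nonneg_left hfg ht1
        have e2 : ((N:ℝ) - m) * B = ((N:ℝ) - m) + (Real.exp t - 1) * ((K:ℝ) * ((N:ℝ) - m) / N) := by
          rw [hB]
          field_simp
          ring
        rw [e2, add_mul]
        nlinarith [h2]
      refine le_trans step1 ?_
      have h3 := mul_le_mul_of_nonneg_left (ih hmN) (mul_nonneg hNm0 hB0)
      linarith [h3]
    -- conclude by dividing by (m+1) and converting the choose
    have hch : ((N:ℝ) - m) * (N.choose m : ℝ) = ((m:ℝ)+1) * (N.choose (m+1) : ℝ) := by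
      have h0 := Nat.choose_succ_right_eq N m
      have hcast : ((N.choose (m+1) * (m+1) : ℕ) : ℝ) = ((N.choose m * (N - m) : ℕ) : ℝ) := by
        exact_mod_cast congrArg (Nat.cast : ℕ → ℝ) h0
      push_cast [Nat.cast_sub hmN] at hcast
      linarith
    have hm1 : (0:ℝ) < (m:ℝ) + 1 := by positivity
    rw [← mul_le_mul_iff_right₀ hm1]
    calc ((m:ℝ)+1) * ∑ s ∈ powersetCard (m+1) (univ : Finset (Fin N)),
          Real.exp (t * ((s ∩ marked N K).card : ℝ))
        ≤ ((N:ℝ) - m) * B * ((N.choose m : ℝ) * B ^ m) := hchain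
      _ = (((N:ℝ) - m) * (N.choose m : ℝ)) * B ^ (m+1) := by ring
      _ = ((m:ℝ)+1) * ((N.choose (m+1) : ℝ) * B ^ (m+1)) := by rw [hch]; ring


/-- **Hoeffding's inequality for sampling without replacement** (Hoeffding 1963, §6):
if `X` counts the marked items in a uniform random sample of size `d` drawn without
replacement from a population of `N` items containing `K` marked items, and `p = K/N`,
then for any `ε > 0`, `P(X ≥ d(p + ε)) ≤ exp(-2 ε² d)`. -/
theorem hoeffding_sampling_without_replacement
    (N K d : ℕ) (hd : d ≤ N) (hK : K ≤ N) (ε : ℝ) (hε : 0 < ε) :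
    hyperProb N K d (fun X => (X : ℝ) ≥ d * ((K : ℝ) / N + ε)) ≤
      Real.exp (-2 * ε ^ 2 * d) := by
  classical
  have hp0 : (0:ℝ) ≤ (K:ℝ)/N := by positivity
  have hp1 : (K:ℝ)/N ≤ 1 := by
    rcases Nat.eq_zero_or_pos N with h | h
    · subst h; interval_cases K; simp
    · rw [div_le_one (by exact_mod_cast h)]; exact_mod_cast hK
  set t : ℝ := 4 * ε with htdef
  have ht : 0 ≤ t := by positivity
  set a : ℝ := d * ((K:ℝ)/N + ε) with ha
  set B : ℝ := (1 - (K:ℝ)/N) + (K:ℝ)/N * Real.exp t with hB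
  have hB0 : (0:ℝ) ≤ B := by
    have h1 : (1:ℝ) ≤ Real.exp t := Real.one_le_exp ht
    rw [hB]
    nlinarith [mul_nonneg hp0 (sub_nonneg.mpr h1)]
  have hCd : (0:ℝ) < (N.choose d : ℝ) := by exact_mod_cast Nat.choose_pos hd
  unfold hyperProb
  rw [Finset.card_powersetCard, Finset.card_univ, Fintype.card_fin]
  rw [div_le_iff₀ hCd]
  -- Chernoff step
  have hchern : ((((Finset.univ : Finset (Fin N)).powersetCard d).filter
      (fun s => ((((s ∩ marked N K).card : ℕ)  : ℝ)) ≥ a)).card : ℝ)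
      ≤ (∑ s ∈ powersetCard d (univ : Finset (Fin N)),
          Real.exp (t * ((s ∩ marked N K).card : ℝ))) * Real.exp (-(t * a)) := by
    rw [Finset.card_eq_sum_ones, Nat.cast_sum]
    calc ∑ s ∈ (((Finset.univ : Finset (Fin N)).powersetCard d).filter
            (fun s => ((((s ∩ marked N K).card : ℕ) : ℝ)) ≥ a)), ((1:ℕ):ℝ)
        ≤ ∑ s ∈ (((Finset.univ : Finset (Fin N)).powersetCard d).filter
            (fun s => ((((s ∩ marked N K).card : ℕ) : ℝ)) ≥ a)),
            Real.exp (t * ((s ∩ marked N K).card : ℝ)) * Real.exp (-(t * a)) := by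
          apply Finset.sum_le_sum
          intro s hs
          have hsc := (Finset.mem_filter.mp hs).2
          rw [← Real.exp_add, Nat.cast_one]
          rw [show (1:ℝ) = Real.exp 0 by simp]
          apply Real.exp_le_exp.mpr
          have : 0 ≤ t * (((s ∩ marked N K).card : ℝ) - a) :=
            mul_nonneg ht (by linarith [hsc])
          nlinarith [this]
      _ ≤ ∑ s ∈ powersetCard d (univ : Finset (Fin N)),
            Real.exp (t * ((s ∩ marked N K).card : ℝ)) * Real.exp (-(t * a)) := by
          apply Finset.sum_le_sum_of_subset_of_nonneg (Finset.filter_subset _ _)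
          intro s _ _
          positivity
      _ = (∑ s ∈ powersetCard d (univ : Finset (Fin N)),
            Real.exp (t * ((s ∩ marked N K).card : ℝ))) * Real.exp (-(t * a)) := by
          rw [Finset.sum_mul]
  have hmgf := mgf_bound N K hK t ht d hd
  have step2 : ((((Finset.univ : Finset (Fin N)).powersetCard d).filter
      (fun s => ((((s ∩ marked N K).card : ℕ) : ℝ)) ≥ a)).card : ℝ)
      ≤ ((N.choose d : ℝ) * B ^ d) * Real.exp (-(t * a)) := by
    refine le_trans hchern ?_
    exact mul_le_mul_of_nonneg_right hmgf (Real.exp_pos _).le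
  -- bound B^d
  have hBle : B ≤ Real.exp ((K:ℝ)/N * t + t^2/8) := hoeffding_lemma hp0 hp1 ht
  have hBpow : B ^ d ≤ Real.exp ((K:ℝ)/N * t + t^2/8) ^ d := pow_le_pow_left₀ hB0 hBle d
  have hfinal : ((N.choose d : ℝ) * B ^ d) * Real.exp (-(t * a))
      ≤ Real.exp (-2 * ε ^ 2 * d) * (N.choose d : ℝ) := by
    have h1 : Real.exp ((K:ℝ)/N * t + t^2/8) ^ d = Real.exp (d * ((K:ℝ)/N * t + t^2/8)) := by
      rw [← Real.exp_nat_mul]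
    have h2 : Real.exp (d * ((K:ℝ)/N * t + t^2/8)) * Real.exp (-(t * a))
        = Real.exp (-2 * ε ^ 2 * d) := by
      rw [← Real.exp_add]
      congr 1
      rw [ha, htdef]
      ring
    calc ((N.choose d : ℝ) * B ^ d) * Real.exp (-(t * a))
        ≤ ((N.choose d : ℝ) * Real.exp (d * ((K:ℝ)/N * t + t^2/8))) * Real.exp (-(t * a)) := by
          rw [← h1]
          apply mul_le_mul_of_nonneg_right _ (Real.exp_pos _).le
          exact mul_le_mul_of_nonneg_left hBpow hCd.le
      _ = Real.exp (-2 * ε ^ 2 * d) * (N.choose d : ℝ) := by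
          rw [mul_assoc, h2]; ring
  exact le_trans step2 hfinal
end

section
/- Hoeffding's lemma ingredient: for a hypergeometric random variable X with parameters (N, K, d) and p = K/N, the moment generating function satisfies E[exp(s(X - dp))] ≤ exp(s² d / 8) for all real s. -/
open Finset

open Real

lemma hyp_h_pos {p : ℝ} (hp0 : 0 ≤ p) (hp1 : p ≤ 1) (t : ℝ) :
    0 < p * Real.exp t + (1 - p) := by
  rcases lt_or_eq_of_le hp1 with h | h
  · have := mul_nonneg hp0 (Real.exp_pos t).le
    linarith
  · subst h
    simpa using Real.exp_pos t

private noncomputable def hypφ (p : ℝ) : ℝ → ℝ :=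
  fun t => t / 4 + p - p * Real.exp t / (p * Real.exp t + (1 - p))

lemma hyp_hasDerivAt_g {p : ℝ} (hp0 : 0 ≤ p) (hp1 : p ≤ 1) (t : ℝ) :
    HasDerivAt (fun t => t ^ 2 / 8 + t * p - Real.log (p * Real.exp t + (1 - p)))
      (hypφ p t) t := by
  have hpos := hyp_h_pos hp0 hp1 t
  have h1 : HasDerivAt (fun t : ℝ => t ^ 2 / 8 + t * p) (t / 4 + p) t := by
    have : HasDerivAt (fun t : ℝ => t ^ 2 / 8 + t * p)
        ((2 : ℕ) * t ^ 1 / 8 + 1 * p) t :=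
      ((hasDerivAt_pow 2 t).div_const 8).add ((hasDerivAt_id t).mul_const p)
    convert this using 1; ring
  have h2 : HasDerivAt (fun t : ℝ => p * Real.exp t + (1 - p)) (p * Real.exp t) t :=
    ((Real.hasDerivAt_exp t).const_mul p).add_const _
  exact h1.sub (h2.log hpos.ne')

lemma hyp_hasDerivAt_φ {p : ℝ} (hp0 : 0 ≤ p) (hp1 : p ≤ 1) (t : ℝ) :
    HasDerivAt (hypφ p)
      (1 / 4 - (p * Real.exp t * (p * Real.exp t + (1 - p)) -
        p * Real.exp t * (p * Real.exp t)) / (p * Real.exp t + (1 - p)) ^ 2) t := by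
  have hpos := hyp_h_pos hp0 hp1 t
  have h2 : HasDerivAt (fun t : ℝ => p * Real.exp t + (1 - p)) (p * Real.exp t) t :=
    ((Real.hasDerivAt_exp t).const_mul p).add_const _
  have h3 : HasDerivAt (fun t : ℝ => p * Real.exp t) (p * Real.exp t) t :=
    (Real.hasDerivAt_exp t).const_mul p
  have h1 : HasDerivAt (fun t : ℝ => t / 4 + p) (1 / 4) t := by
    simpa using ((hasDerivAt_id t).div_const 4).add_const p
  exact h1.sub (h3.div h2 hpos.ne')

lemma hyp_deriv_φ_nonneg {p : ℝ} (hp0 : 0 ≤ p) (hp1 : p ≤ 1) (t : ℝ) :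
    0 ≤ 1 / 4 - (p * Real.exp t * (p * Real.exp t + (1 - p)) -
        p * Real.exp t * (p * Real.exp t)) / (p * Real.exp t + (1 - p)) ^ 2 := by
  have hpos := hyp_h_pos hp0 hp1 t
  rw [sub_nonneg, div_le_iff₀ (by positivity)]
  nlinarith [sq_nonneg (p * Real.exp t - (1 - p))]

lemma hyp_φ_monotone {p : ℝ} (hp0 : 0 ≤ p) (hp1 : p ≤ 1) : Monotone (hypφ p) := by
  apply monotone_of_deriv_nonneg
  · exact fun t => (hyp_hasDerivAt_φ hp0 hp1 t).differentiableAt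
  · intro t
    rw [(hyp_hasDerivAt_φ hp0 hp1 t).deriv]
    exact hyp_deriv_φ_nonneg hp0 hp1 t

lemma hyp_φ_zero (p : ℝ) : hypφ p 0 = 0 := by
  unfold hypφ
  rcases eq_or_ne p 0 with h | h
  · simp [h]
  · field_simp
    simp only [Real.exp_zero]
    ring

lemma hyp_g_nonneg {p : ℝ} (hp0 : 0 ≤ p) (hp1 : p ≤ 1) (t : ℝ) :
    0 ≤ t ^ 2 / 8 + t * p - Real.log (p * Real.exp t + (1 - p)) := by
  set g : ℝ → ℝ := fun t => t ^ 2 / 8 + t * p - Real.log (p * Real.exp t + (1 - p)) with hg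
  have hg0 : g 0 = 0 := by simp [hg]
  have hdiff : ∀ x, DifferentiableAt ℝ g x :=
    fun x => (hyp_hasDerivAt_g hp0 hp1 x).differentiableAt
  have hderiv : ∀ x, deriv g x = hypφ p x := fun x => (hyp_hasDerivAt_g hp0 hp1 x).deriv
  rcases le_total 0 t with ht | ht
  · have hmono : MonotoneOn g (Set.Ici 0) := by
      apply monotoneOn_of_deriv_nonneg (convex_Ici 0)
        (Continuous.continuousOn (continuous_iff_continuousAt.mpr (fun x => (hdiff x).continuousAt)))
        (fun x _ => (hdiff x).differentiableWithinAt)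
      intro x hx
      rw [hderiv x, ← hyp_φ_zero p]
      exact hyp_φ_monotone hp0 hp1 (le_of_lt (by simpa using hx))
    have := hmono (Set.self_mem_Ici) (Set.mem_Ici.mpr ht) ht
    rw [hg0] at this
    exact this
  · have hanti : AntitoneOn g (Set.Iic 0) := by
      apply antitoneOn_of_deriv_nonpos (convex_Iic 0)
        (Continuous.continuousOn (continuous_iff_continuousAt.mpr (fun x => (hdiff x).continuousAt)))
        (fun x _ => (hdiff x).differentiableWithinAt)
      intro x hx
      rw [hderiv x, ← hyp_φ_zero p]
      exact hyp_φ_monotone hp0 hp1 (le_of_lt (by simpa using hx))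
    have := hanti (Set.mem_Iic.mpr ht) (Set.self_mem_Iic) ht
    rw [hg0] at this
    exact this

/-- Bernoulli MGF bound (Hoeffding's lemma, two-point case, span 1, at endpoints). -/
lemma hyp_bernoulli {p : ℝ} (hp0 : 0 ≤ p) (hp1 : p ≤ 1) (t : ℝ) :
    p * Real.exp t + (1 - p) ≤ Real.exp (t ^ 2 / 8 + t * p) := by
  have hpos := hyp_h_pos hp0 hp1 t
  have h := hyp_g_nonneg hp0 hp1 t
  have : Real.log (p * Real.exp t + (1 - p)) ≤ t ^ 2 / 8 + t * p := by linarith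
  calc p * Real.exp t + (1 - p) = Real.exp (Real.log (p * Real.exp t + (1 - p))) :=
        (Real.exp_log hpos).symm
    _ ≤ _ := Real.exp_le_exp.mpr this

/-- Two-point Hoeffding: weights q, 1-q on points x, y with |x - y| ≤ 1. -/
lemma hyp_two_point {q x y : ℝ} (hq0 : 0 ≤ q) (hq1 : q ≤ 1) (hxy : |x - y| ≤ 1) (s : ℝ) :
    q * Real.exp (s * x) + (1 - q) * Real.exp (s * y) ≤
      Real.exp (s * (q * x + (1 - q) * y) + s ^ 2 / 8) := by
  set t := s * (x - y) with ht
  have key := hyp_bernoulli hq0 hq1 t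
  have e1 : s * x = s * (q * x + (1 - q) * y) + t * (1 - q) := by rw [ht]; ring
  have e2 : s * y = s * (q * x + (1 - q) * y) + (- (t * q)) := by rw [ht]; ring
  have ht2 : t ^ 2 ≤ s ^ 2 := by
    have h1 : (x - y) ^ 2 ≤ 1 := by
      have := abs_le.mp hxy
      nlinarith [this.1, this.2]
    calc t ^ 2 = s ^ 2 * (x - y) ^ 2 := by rw [ht]; ring
      _ ≤ s ^ 2 * 1 := by nlinarith [sq_nonneg s]
      _ = s ^ 2 := by ring
  have expand : q * Real.exp (s * x) + (1 - q) * Real.exp (s * y)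
      = Real.exp (s * (q * x + (1 - q) * y)) *
        (q * Real.exp (t * (1 - q)) + (1 - q) * Real.exp (-(t * q))) := by
    rw [e1, e2, Real.exp_add, Real.exp_add]; ring
  rw [expand, Real.exp_add]
  apply mul_le_mul_of_nonneg_left _ (Real.exp_pos _).le
  calc q * Real.exp (t * (1 - q)) + (1 - q) * Real.exp (-(t * q))
      = (q * Real.exp t + (1 - q)) * Real.exp (-(t * q)) := by
        have h : t * (1 - q) = t + -(t * q) := by ring
        rw [h, Real.exp_add]; ring
    _ ≤ Real.exp (t ^ 2 / 8 + t * q) * Real.exp (-(t * q)) := by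
        apply mul_le_mul_of_nonneg_right key (Real.exp_pos _).le
    _ = Real.exp (t ^ 2 / 8) := by rw [← Real.exp_add]; ring_nf
    _ ≤ Real.exp (s ^ 2 / 8) := Real.exp_le_exp.mpr (by linarith)


open Finset


lemma mem_marked {N K : ℕ} {i : Fin N} : i ∈ marked N K ↔ (i : ℕ) < K := by
  simp [marked]

lemma marked_card {N K : ℕ} (h : K ≤ N) : (marked N K).card = K := by
  have he : marked N K = (Finset.range K).attachFin
      (fun m hm => lt_of_lt_of_le (Finset.mem_range.mp hm) h) := by
    ext i; simp [mem_marked, Finset.mem_attachFin]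
  rw [he, Finset.card_attachFin, Finset.card_range]

lemma succAbove_val {n : ℕ} (i : Fin (n + 1)) (j : Fin n) :
    ((i.succAbove j : Fin (n + 1)) : ℕ) = if (j : ℕ) < (i : ℕ) then (j : ℕ) else (j : ℕ) + 1 := by
  rw [Fin.succAbove]
  split_ifs with h1 h2 h2
  · rfl
  · exact absurd (by simpa [Fin.lt_def] using h1) h2
  · exact absurd (by simpa [Fin.lt_def] using h2) h1
  · rfl

lemma succAbove_mem_marked {n K : ℕ} (hK : 1 ≤ K) (i : Fin (n + 1)) (j : Fin n) :
    (i.succAbove j ∈ marked (n + 1) K) ↔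
      (j : ℕ) < (if (i : ℕ) < K then K - 1 else K) := by
  rw [mem_marked, succAbove_val]
  split_ifs <;> omega

lemma map_inter_marked {n K : ℕ} (hK : 1 ≤ K) (i : Fin (n + 1)) (C : Finset (Fin n)) :
    (C.map (Fin.succAboveEmb i)) ∩ marked (n + 1) K
      = (C ∩ marked n (if (i : ℕ) < K then K - 1 else K)).map (Fin.succAboveEmb i) := by
  ext a
  simp only [Finset.mem_inter, Finset.mem_map, Fin.succAboveEmb, Function.Embedding.coeFn_mk]
  constructor
  · rintro ⟨⟨j, hj, rfl⟩, hm⟩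
    exact ⟨j, ⟨hj, mem_marked.mpr ((succAbove_mem_marked hK i j).mp hm)⟩, rfl⟩
  · rintro ⟨j, ⟨hj, hm⟩, rfl⟩
    exact ⟨⟨j, hj, rfl⟩, (succAbove_mem_marked hK i j).mpr (mem_marked.mp hm)⟩

lemma insert_card_inter {n K : ℕ} (hK : 1 ≤ K) (i : Fin (n + 1)) (C : Finset (Fin n)) :
    ((insert i (C.map (Fin.succAboveEmb i))) ∩ marked (n + 1) K).card
      = if (i : ℕ) < K then (C ∩ marked n (K - 1)).card + 1 else (C ∩ marked n K).card := by
  have hnotmem : i ∉ C.map (Fin.succAboveEmb i) := by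
    simp only [Finset.mem_map, Fin.succAboveEmb, Function.Embedding.coeFn_mk]
    rintro ⟨j, _, hj⟩
    exact Fin.succAbove_ne i j hj
  split_ifs with h
  · rw [Finset.insert_inter_of_mem (mem_marked.mpr h), Finset.card_insert_of_notMem
      (fun hc => hnotmem (Finset.mem_inter.mp hc).1), map_inter_marked hK i C, if_pos h,
      Finset.card_map]
  · rw [Finset.insert_inter_of_notMem (fun hc => h (mem_marked.mp hc)),
      map_inter_marked hK i C, if_neg h, Finset.card_map]

lemma erase_univ_eq_map {n : ℕ} (i : Fin (n + 1)) :
    (Finset.univ : Finset (Fin (n + 1))).erase i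
      = (Finset.univ : Finset (Fin n)).map (Fin.succAboveEmb i) := by
  ext a
  simp only [Finset.mem_erase, Finset.mem_univ, and_true, Finset.mem_map, Fin.succAboveEmb,
    Function.Embedding.coeFn_mk, true_and]
  exact (Fin.exists_succAbove_eq_iff).symm

lemma hyp_inner_sum {n : ℕ} (f : ℕ → ℝ) (i : Fin (n + 1)) (K e : ℕ) (hK : 1 ≤ K) :
    ∑ A ∈ ((Finset.univ : Finset (Fin (n+1))).powersetCard (e+1)).filter (fun A => i ∈ A),
        f ((A ∩ marked (n + 1) K).card)
      = ∑ C ∈ (Finset.univ : Finset (Fin n)).powersetCard e,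
          (if (i : ℕ) < K then f ((C ∩ marked n (K - 1)).card + 1)
            else f ((C ∩ marked n K).card)) := by
  have step1 : ∑ A ∈ ((Finset.univ : Finset (Fin (n+1))).powersetCard (e+1)).filter
        (fun A => i ∈ A), f ((A ∩ marked (n + 1) K).card)
      = ∑ B ∈ ((Finset.univ : Finset (Fin (n+1))).erase i).powersetCard e,
          f (((insert i B) ∩ marked (n + 1) K).card) := by
    apply Finset.sum_nbij' (fun A => A.erase i) (fun B => insert i B)
    · intro A hA
      simp only [Finset.mem_filter, Finset.mem_powersetCard_univ] at hA
      rw [Finset.mem_powersetCard]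
      exact ⟨Finset.erase_subset_erase i (Finset.subset_univ A),
        by rw [Finset.card_erase_of_mem hA.2, hA.1]; omega⟩
    · intro B hB
      rw [Finset.mem_powersetCard] at hB
      have hiB : i ∉ B := fun hc => (Finset.mem_erase.mp (hB.1 hc)).1 rfl
      simp only [Finset.mem_filter, Finset.mem_powersetCard_univ]
      exact ⟨by rw [Finset.card_insert_of_notMem hiB, hB.2], Finset.mem_insert_self i B⟩
    · intro A hA
      simp only [Finset.mem_filter] at hA
      exact Finset.insert_erase hA.2
    · intro B hB
      rw [Finset.mem_powersetCard] at hB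
      exact Finset.erase_insert (fun hc => (Finset.mem_erase.mp (hB.1 hc)).1 rfl)
    · intro A hA
      simp only [Finset.mem_filter] at hA
      rw [Finset.insert_erase hA.2]
  rw [step1, erase_univ_eq_map i, Finset.powersetCard_map, Finset.sum_map]
  apply Finset.sum_congr rfl
  intro C _
  have hme : (Finset.mapEmbedding (Fin.succAboveEmb i)).toEmbedding C
      = C.map (Fin.succAboveEmb i) := rfl
  rw [hme, insert_card_inter hK i C]
  split_ifs <;> rfl

lemma hyp_key (n K e : ℕ) (hK1 : 1 ≤ K) (hK2 : K ≤ n) (f : ℕ → ℝ) :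
    ((e : ℝ) + 1) * ∑ A ∈ (Finset.univ : Finset (Fin (n+1))).powersetCard (e+1),
        f ((A ∩ marked (n+1) K).card)
      = (K : ℝ) * ∑ C ∈ (Finset.univ : Finset (Fin n)).powersetCard e,
          f ((C ∩ marked n (K-1)).card + 1)
        + ((n + 1 - K : ℕ) : ℝ) * ∑ C ∈ (Finset.univ : Finset (Fin n)).powersetCard e,
          f ((C ∩ marked n K).card) := by
  set S1 := ∑ C ∈ (Finset.univ : Finset (Fin n)).powersetCard e,
      f ((C ∩ marked n (K-1)).card + 1) with hS1
  set S2 := ∑ C ∈ (Finset.univ : Finset (Fin n)).powersetCard e,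
      f ((C ∩ marked n K).card) with hS2
  have step1 : ((e : ℝ) + 1) * ∑ A ∈ (Finset.univ : Finset (Fin (n+1))).powersetCard (e+1),
        f ((A ∩ marked (n+1) K).card)
      = ∑ A ∈ (Finset.univ : Finset (Fin (n+1))).powersetCard (e+1),
          ∑ i ∈ (Finset.univ : Finset (Fin (n+1))),
            (if i ∈ A then f ((A ∩ marked (n+1) K).card) else 0) := by
    rw [Finset.mul_sum]
    apply Finset.sum_congr rfl
    intro A hA
    rw [Finset.mem_powersetCard_univ] at hA
    rw [Finset.sum_ite_mem, Finset.univ_inter, Finset.sum_const, hA]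
    push_cast
    ring
  have step2 : ∀ i : Fin (n+1),
      ∑ A ∈ (Finset.univ : Finset (Fin (n+1))).powersetCard (e+1),
        (if i ∈ A then f ((A ∩ marked (n+1) K).card) else 0)
      = if (i : ℕ) < K then S1 else S2 := by
    intro i
    rw [← Finset.sum_filter, hyp_inner_sum f i K e hK1]
    split_ifs with h
    · simp only [if_pos h, hS1]
    · simp only [if_neg h, hS2]
  rw [step1, Finset.sum_comm]
  have step3 : ∑ i ∈ (Finset.univ : Finset (Fin (n+1))), (if (i : ℕ) < K then S1 else S2)
      = (K : ℝ) * S1 + ((n + 1 - K : ℕ) : ℝ) * S2 := by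
    rw [Finset.sum_ite, Finset.sum_const, Finset.sum_const]
    have h1 : ((Finset.univ : Finset (Fin (n+1))).filter (fun i : Fin (n+1) => (i : ℕ) < K)).card = K := by
      rw [show ((Finset.univ : Finset (Fin (n+1))).filter (fun i : Fin (n+1) => (i : ℕ) < K))
        = marked (n+1) K from rfl]
      exact marked_card (by omega)
    have h2 : ((Finset.univ : Finset (Fin (n+1))).filter (fun i : Fin (n+1) => ¬ (i : ℕ) < K)).card
        = n + 1 - K := by
      have h3 := Finset.card_filter_add_card_filter_not
        (s := (Finset.univ : Finset (Fin (n+1)))) (p := fun i : Fin (n+1) => (i : ℕ) < K)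
      rw [h1] at h3
      simp only [Finset.card_univ, Fintype.card_fin] at h3
      omega
    rw [h1, h2, nsmul_eq_mul, nsmul_eq_mul]
  calc ∑ i ∈ (Finset.univ : Finset (Fin (n+1))),
        ∑ A ∈ (Finset.univ : Finset (Fin (n+1))).powersetCard (e+1),
          (if i ∈ A then f ((A ∩ marked (n+1) K).card) else 0)
      = ∑ i ∈ (Finset.univ : Finset (Fin (n+1))), (if (i : ℕ) < K then S1 else S2) :=
        Finset.sum_congr rfl (fun i _ => step2 i)
    _ = _ := step3


/-- Expectation of `f(X)` where `X = |sk ∩ Marked|` for a uniformly random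
`d`-element subset `sk` of an `N`-element set with `K` marked elements. -/
noncomputable def hyperExp (N K d : ℕ) (f : ℕ → ℝ) : ℝ :=
  (∑ s ∈ (Finset.univ : Finset (Fin N)).powersetCard d, f ((s ∩ marked N K).card)) /
    ((((Finset.univ : Finset (Fin N)).powersetCard d).card : ℝ))

lemma hyp_card (N d : ℕ) :
    ((Finset.univ : Finset (Fin N)).powersetCard d).card = N.choose d := by
  rw [Finset.card_powersetCard, Finset.card_univ, Fintype.card_fin]

lemma hyp_rec (n K e : ℕ) (hK1 : 1 ≤ K) (hK2 : K ≤ n) (he : e ≤ n) (f : ℕ → ℝ) :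
    hyperExp (n+1) K (e+1) f
      = ((K : ℝ)/(n+1)) * hyperExp n (K-1) e (fun X => f (X+1))
        + (((n + 1 - K : ℕ) : ℝ)/(n+1)) * hyperExp n K e f := by
  unfold hyperExp
  rw [hyp_card, hyp_card]
  have key := hyp_key n K e hK1 hK2 f
  have hcast : ((n : ℝ) + 1) * (n.choose e : ℝ) = ((n+1).choose (e+1) : ℝ) * ((e : ℝ) + 1) := by
    exact_mod_cast congrArg (Nat.cast : ℕ → ℝ) (Nat.add_one_mul_choose_eq n e)
  have h1 : (((n+1).choose (e+1) : ℕ) : ℝ) ≠ 0 :=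
    Nat.cast_ne_zero.mpr (Nat.choose_pos (by omega)).ne'
  have h2 : ((n.choose e : ℕ) : ℝ) ≠ 0 := Nat.cast_ne_zero.mpr (Nat.choose_pos he).ne'
  have h3 : ((n : ℝ) + 1) ≠ 0 := by positivity
  beta_reduce
  field_simp
  linear_combination (∑ s ∈ Finset.powersetCard (e + 1) Finset.univ,
      f ((s ∩ marked (n + 1) K).card)) * hcast + (((n + 1).choose (e + 1) : ℕ) : ℝ) * key

lemma hyp_const (N K d : ℕ) (hd : d ≤ N) {f : ℕ → ℝ} {c : ℝ}
    (hf : ∀ A ∈ (Finset.univ : Finset (Fin N)).powersetCard d, f ((A ∩ marked N K).card) = c) :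
    hyperExp N K d f = c := by
  unfold hyperExp
  rw [Finset.sum_congr rfl hf, Finset.sum_const, hyp_card, nsmul_eq_mul]
  have h : (N.choose d : ℝ) ≠ 0 := Nat.cast_ne_zero.mpr (Nat.choose_pos hd).ne'
  field_simp

lemma hyp_smul (N K d : ℕ) (c : ℝ) (g : ℕ → ℝ) :
    hyperExp N K d (fun X => c * g X) = c * hyperExp N K d g := by
  unfold hyperExp
  rw [← Finset.mul_sum, mul_div_assoc]

lemma hyp_mainU (σ : ℝ) : ∀ (d N K : ℕ), K ≤ N → d ≤ N →
    hyperExp N K d (fun X => Real.exp (σ * X)) ≤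
      Real.exp (σ * d * K / N + σ ^ 2 * d / 8) := by
  intro d
  induction d with
  | zero =>
    intro N K _ _
    have h0 : hyperExp N K 0 (fun X => Real.exp (σ * X)) = 1 := by
      apply hyp_const N K 0 (Nat.zero_le N)
      intro A hA
      rw [Finset.powersetCard_zero, Finset.mem_singleton] at hA
      subst hA
      simp
    rw [h0]
    simp
  | succ e ih =>
    intro N K hK hd
    obtain ⟨m, rfl⟩ : ∃ m, N = m + 1 := ⟨N - 1, by omega⟩
    by_cases hK0 : K = 0
    · subst hK0
      have h0 : hyperExp (m+1) 0 (e+1) (fun X => Real.exp (σ * X)) = 1 := by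
        apply hyp_const _ _ _ hd
        intro A _
        have hm0 : marked (m+1) 0 = ∅ := by ext i; simp [mem_marked]
        rw [hm0, Finset.inter_empty]
        simp
      rw [h0]
      simp only [Nat.cast_zero, mul_zero, zero_div, zero_add]
      exact Real.one_le_exp (by positivity)
    by_cases hKN : K = m + 1
    · subst hKN
      have h0 : hyperExp (m+1) (m+1) (e+1) (fun X => Real.exp (σ * X))
          = Real.exp (σ * ((e+1 : ℕ) : ℝ)) := by
        apply hyp_const _ _ _ hd
        intro A hA
        have hmu : marked (m+1) (m+1) = Finset.univ := by
          ext i; simp [mem_marked, i.isLt]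
        rw [hmu, Finset.inter_univ, Finset.mem_powersetCard_univ.mp hA]
      rw [h0, Real.exp_le_exp]
      have hm1 : ((m : ℝ) + 1) ≠ 0 := by positivity
      have hcan : σ * (((e+1 : ℕ)) : ℝ) * (((m+1 : ℕ)) : ℝ) / (((m+1 : ℕ)) : ℝ)
          = σ * (((e+1 : ℕ)) : ℝ) := by
        push_cast
        field_simp
      rw [hcan]
      have : (0:ℝ) ≤ σ ^ 2 * (((e+1:ℕ)):ℝ) / 8 := by positivity
      linarith
    · -- main case : 1 ≤ K ≤ m
      have hK1 : 1 ≤ K := by omega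
      have hK2 : K ≤ m := by omega
      have hm1 : 1 ≤ m := by omega
      have he : e ≤ m := by omega
      have hmR : (0:ℝ) < m := by exact_mod_cast hm1
      have hm1R : (0:ℝ) < (m:ℝ) + 1 := by positivity
      rw [hyp_rec m K e hK1 hK2 he]
      have hfun : (fun X : ℕ => Real.exp (σ * ((X + 1 : ℕ) : ℝ)))
          = fun X : ℕ => Real.exp σ * Real.exp (σ * X) := by
        funext X
        rw [← Real.exp_add]
        push_cast
        ring_nf
      rw [hfun, hyp_smul]
      set E1 := hyperExp m (K-1) e (fun X => Real.exp (σ * X)) with hE1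
      set E2 := hyperExp m K e (fun X => Real.exp (σ * X)) with hE2
      have hB1 : E1 ≤ Real.exp (σ * e * ((K-1 : ℕ) : ℝ) / m + σ ^ 2 * e / 8) :=
        ih m (K-1) (by omega) he
      have hB2 : E2 ≤ Real.exp (σ * e * K / m + σ ^ 2 * e / 8) := ih m K hK2 he
      set q : ℝ := (K : ℝ) / ((m : ℝ) + 1) with hq
      have hq0 : 0 ≤ q := by positivity
      have hq1 : q ≤ 1 := by
        rw [hq, div_le_one hm1R]
        exact_mod_cast by omega
      set x : ℝ := 1 + (e : ℝ) * ((K : ℝ) - 1) / m with hx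
      set y : ℝ := (e : ℝ) * (K : ℝ) / m with hy
      have hxy : |x - y| ≤ 1 := by
        have hsub : x - y = 1 - (e : ℝ) / m := by rw [hx, hy]; field_simp; ring
        rw [hsub, abs_le]
        constructor
        · have : (e : ℝ) / m ≤ 1 := by
            rw [div_le_one hmR]; exact_mod_cast he
          linarith
        · have : (0:ℝ) ≤ (e : ℝ) / m := by positivity
          linarith
      have htp := hyp_two_point hq0 hq1 hxy σ
      have hKc : (((K - 1 : ℕ)) : ℝ) = (K : ℝ) - 1 := by
        rw [Nat.cast_sub hK1]; push_cast; ring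
      have hcoef : (((m + 1 - K : ℕ)) : ℝ) / ((m : ℝ) + 1) = 1 - q := by
        have hc2 : (((m + 1 - K : ℕ)) : ℝ) = ((m : ℝ) + 1) - K := by
          rw [Nat.cast_sub (by omega)]; push_cast; ring
        rw [hc2, hq]
        field_simp
      rw [hcoef]
      calc q * (Real.exp σ * E1) + (1 - q) * E2
          ≤ q * (Real.exp (σ * x) * Real.exp (σ ^ 2 * e / 8))
            + (1 - q) * (Real.exp (σ * y) * Real.exp (σ ^ 2 * e / 8)) := by
            apply add_le_add
            · apply mul_le_mul_of_nonneg_left _ hq0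
              calc Real.exp σ * E1
                  ≤ Real.exp σ * Real.exp (σ * e * ((K-1 : ℕ) : ℝ) / m + σ ^ 2 * e / 8) :=
                    mul_le_mul_of_nonneg_left hB1 (Real.exp_pos σ).le
                _ = Real.exp (σ * x) * Real.exp (σ ^ 2 * (e : ℝ) / 8) := by
                    rw [← Real.exp_add, ← Real.exp_add, hKc, hx]
                    congr 1
                    field_simp
                    ring
            · apply mul_le_mul_of_nonneg_left _ (by linarith : (0:ℝ) ≤ 1 - q)
              calc E2 ≤ Real.exp (σ * e * K / m + σ ^ 2 * e / 8) := hB2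
                _ = Real.exp (σ * y) * Real.exp (σ ^ 2 * (e : ℝ) / 8) := by
                    rw [← Real.exp_add, hy]
                    congr 1
                    ring
        _ = Real.exp (σ ^ 2 * (e : ℝ) / 8)
              * (q * Real.exp (σ * x) + (1 - q) * Real.exp (σ * y)) := by ring
        _ ≤ Real.exp (σ ^ 2 * (e : ℝ) / 8)
              * Real.exp (σ * (q * x + (1 - q) * y) + σ ^ 2 / 8) :=
            mul_le_mul_of_nonneg_left htp (Real.exp_pos _).le
        _ = Real.exp (σ * ((e+1 : ℕ) : ℝ) * ((K : ℕ) : ℝ) / ((m+1 : ℕ) : ℝ)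
              + σ ^ 2 * ((e+1 : ℕ) : ℝ) / 8) := by
            rw [← Real.exp_add]
            congr 1
            rw [hq, hx, hy]
            push_cast
            field_simp
            ring



/-- **Hoeffding's MGF bound for sampling without replacement.** For a hypergeometric
random variable `X` with parameters `(N, K, d)` and `p = K/N`, the moment generating
function satisfies `E[exp(s(X - dp))] ≤ exp(s² d / 8)` for all real `s`. -/
theorem hypergeometric_mgf_bound
    (N K d : ℕ) (hd : d ≤ N) (hK : K ≤ N) (s : ℝ) :
    hyperExp N K d (fun X => Real.exp (s * ((X : ℝ) - d * ((K : ℝ) / N)))) ≤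
      Real.exp (s ^ 2 * d / 8) := by
  have hfun : (fun X : ℕ => Real.exp (s * ((X : ℝ) - d * ((K : ℝ) / N))))
      = fun X : ℕ => Real.exp (-(s * ((d : ℝ) * ((K : ℝ) / N)))) * Real.exp (s * X) := by
    funext X
    rw [← Real.exp_add]
    congr 1
    ring
  rw [hfun, hyp_smul]
  have h := hyp_mainU s d N K hK hd
  calc Real.exp (-(s * ((d : ℝ) * ((K : ℝ) / N)))) * hyperExp N K d (fun X => Real.exp (s * X))
      ≤ Real.exp (-(s * ((d : ℝ) * ((K : ℝ) / N))))
          * Real.exp (s * d * K / N + s ^ 2 * d / 8) :=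
        mul_le_mul_of_nonneg_left h (Real.exp_pos _).le
    _ = Real.exp (s ^ 2 * d / 8) := by
        rw [← Real.exp_add]
        congr 1
        ring
end
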